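/- For all integers n ≥ 3 and L ≥ 2, C((L+1)n − 1, n − 2) < 2^{(L+1)(n−1) − 2}, where C(a,b) denotes the binomial coefficient. -/

import Mathlib

private lemma step1 (m k : ℕ) (h : 3 * k ≤ m) :
    2 * Nat.choose (m + 1) k ≤ 3 * Nat.choose m k := by
  have h1 := Nat.choose_mul_succ_eq m k
  have hpos : 0 < m + 1 - k := by omega
  have key : 2 * Nat.choose (m + 1) k * (m + 1 - k) ≤ 3 * Nat.choose m k * (m + 1 - k) := by
    have e : 2 * Nat.choose (m + 1) k * (m + 1 - k) = 2 * (Nat.choose m k * (m + 1)) := by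
      rw [h1]; ring
    rw [e]
    have : 2 * (m + 1) ≤ 3 * (m + 1 - k) := by omega
    calc 2 * (Nat.choose m k * (m + 1)) = Nat.choose m k * (2 * (m + 1)) := by ring
      _ ≤ Nat.choose m k * (3 * (m + 1 - k)) := Nat.mul_le_mul_left _ this
      _ = 3 * Nat.choose m k * (m + 1 - k) := by ring
  exact Nat.le_of_mul_le_mul_right key hpos

private lemma step_iter (j m k : ℕ) (h : 3 * k ≤ m) :
    2 ^ j * Nat.choose (m + j) k ≤ 3 ^ j * Nat.choose m k := by
  induction j with
  | zero => simp
  | succ j ih =>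
    have h1 : 2 * Nat.choose (m + j + 1) k ≤ 3 * Nat.choose (m + j) k :=
      step1 (m + j) k (by omega)
    calc 2 ^ (j + 1) * Nat.choose (m + (j + 1)) k
        = 2 ^ j * (2 * Nat.choose (m + j + 1) k) := by ring_nf
      _ ≤ 2 ^ j * (3 * Nat.choose (m + j) k) := Nat.mul_le_mul_left _ h1
      _ = 3 * (2 ^ j * Nat.choose (m + j) k) := by ring
      _ ≤ 3 * (3 ^ j * Nat.choose m k) := Nat.mul_le_mul_left _ ih
      _ = 3 ^ (j + 1) * Nat.choose m k := by ring

private lemma pow3_le (j : ℕ) : 3 ^ (j + 3) ≤ 2 ^ (2 * j + 5) := by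
  induction j with
  | zero => norm_num
  | succ j ih =>
    calc 3 ^ (j + 1 + 3) = 3 * 3 ^ (j + 3) := by ring
      _ ≤ 3 * 2 ^ (2 * j + 5) := Nat.mul_le_mul_left _ ih
      _ ≤ 4 * 2 ^ (2 * j + 5) := Nat.mul_le_mul_right _ (by norm_num)
      _ = 2 ^ (2 * (j + 1) + 5) := by ring

private lemma base_case (k : ℕ) : Nat.choose (3 * k + 5) k < 2 ^ (3 * k + 1) := by
  induction k with
  | zero => simp
  | succ k ih =>
    -- key step: C(3k+8, k+1) ≤ 8 * C(3k+5, k)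
    set a := Nat.choose (3 * k + 5) k with ha
    set b := Nat.choose (3 * k + 6) k with hb
    set c := Nat.choose (3 * k + 7) k with hc
    set d := Nat.choose (3 * k + 8) (k + 1) with hd
    have e1 : a * (3 * k + 6) = b * (2 * k + 6) := by
      have := Nat.choose_mul_succ_eq (3 * k + 5) k
      have h6 : 3 * k + 5 + 1 - k = 2 * k + 6 := by omega
      have h7 : 3 * k + 5 + 1 = 3 * k + 6 := by omega
      rw [h6, h7] at this
      exact this
    have e2 : b * (3 * k + 7) = c * (2 * k + 7) := by
      have := Nat.choose_mul_succ_eq (3 * k + 6) k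
      have h6 : 3 * k + 6 + 1 - k = 2 * k + 7 := by omega
      have h7 : 3 * k + 6 + 1 = 3 * k + 7 := by omega
      rw [h6, h7] at this
      exact this
    have e3 : (3 * k + 8) * c = d * (k + 1) := by
      have := Nat.add_one_mul_choose_eq (3 * k + 7) k
      have h7 : 3 * k + 7 + 1 = 3 * k + 8 := rfl
      rw [h7] at this
      exact this
    have hkey : d ≤ 8 * a := by
      have hD : 0 < (k + 1) * ((2 * k + 7) * (2 * k + 6)) := by positivity
      have hchain : d * ((k + 1) * ((2 * k + 7) * (2 * k + 6)))
          = a * ((3 * k + 8) * ((3 * k + 7) * (3 * k + 6))) := by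
        calc d * ((k + 1) * ((2 * k + 7) * (2 * k + 6)))
            = (d * (k + 1)) * (2 * k + 7) * (2 * k + 6) := by ring
          _ = ((3 * k + 8) * c) * (2 * k + 7) * (2 * k + 6) := by rw [e3]
          _ = (3 * k + 8) * (c * (2 * k + 7)) * (2 * k + 6) := by ring
          _ = (3 * k + 8) * (b * (3 * k + 7)) * (2 * k + 6) := by rw [e2]
          _ = (3 * k + 8) * (3 * k + 7) * (b * (2 * k + 6)) := by ring
          _ = (3 * k + 8) * (3 * k + 7) * (a * (3 * k + 6)) := by rw [e1]
          _ = a * ((3 * k + 8) * ((3 * k + 7) * (3 * k + 6))) := by ring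
      have hcoef : (3 * k + 8) * ((3 * k + 7) * (3 * k + 6))
          ≤ 8 * ((k + 1) * ((2 * k + 7) * (2 * k + 6))) := by nlinarith [sq_nonneg k, k.zero_le]
      have : d * ((k + 1) * ((2 * k + 7) * (2 * k + 6)))
          ≤ (8 * a) * ((k + 1) * ((2 * k + 7) * (2 * k + 6))) := by
        rw [hchain]
        calc a * ((3 * k + 8) * ((3 * k + 7) * (3 * k + 6)))
            ≤ a * (8 * ((k + 1) * ((2 * k + 7) * (2 * k + 6)))) :=
              Nat.mul_le_mul_left _ hcoef
          _ = (8 * a) * ((k + 1) * ((2 * k + 7) * (2 * k + 6))) := by ring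
      exact Nat.le_of_mul_le_mul_right this hD
    have hgoal : 3 * (k + 1) + 5 = 3 * k + 8 := by ring
    rw [hgoal]
    calc d ≤ 8 * a := hkey
      _ < 8 * 2 ^ (3 * k + 1) := mul_lt_mul_of_pos_left ih (by norm_num)
      _ = 2 ^ (3 * (k + 1) + 1) := by ring

/-- For all integers n ≥ 3 and L ≥ 2,
C((L+1)n − 1, n − 2) < 2^{(L+1)(n−1) − 2}. -/
theorem stmt16 (n L : ℕ) (hn : 3 ≤ n) (hL : 2 ≤ L) :
    Nat.choose ((L + 1) * n - 1) (n - 2) < 2 ^ ((L + 1) * (n - 1) - 2) := by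
  obtain ⟨j, rfl⟩ : ∃ j, n = j + 3 := ⟨n - 3, by omega⟩
  obtain ⟨M, rfl⟩ : ∃ M, L = M + 2 := ⟨L - 2, by omega⟩
  have hidx : (M + 2 + 1) * (j + 3) - 1 = 3 * (j + 1) + 5 + M * (j + 3) := by
    have e : (M + 2 + 1) * (j + 3) = M * (j + 3) + (3 * j + 9) := by ring
    rw [e]
    generalize M * (j + 3) = P
    omega
  have hexp : (M + 2 + 1) * (j + 3 - 1) - 2 = 3 * (j + 1) + 1 + M * (j + 2) := by
    have e0 : j + 3 - 1 = j + 2 := by omega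
    rw [e0]
    have e : (M + 2 + 1) * (j + 2) = M * (j + 2) + (3 * j + 6) := by ring
    rw [e]
    generalize M * (j + 2) = P
    omega
  have hk2 : j + 3 - 2 = j + 1 := by omega
  rw [hidx, hexp, hk2]
  -- now show: C(3(j+1)+5 + M(j+3), j+1) < 2^(3(j+1)+1 + M(j+2))
  have hbase : Nat.choose (3 * (j + 1) + 5) (j + 1) < 2 ^ (3 * (j + 1) + 1) :=
    base_case (j + 1)
  have hiter : 2 ^ (M * (j + 3)) * Nat.choose (3 * (j + 1) + 5 + M * (j + 3)) (j + 1)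
      ≤ 3 ^ (M * (j + 3)) * Nat.choose (3 * (j + 1) + 5) (j + 1) :=
    step_iter (M * (j + 3)) (3 * (j + 1) + 5) (j + 1) (by omega)
  have hpow : (3:ℕ) ^ (M * (j + 3)) ≤ 2 ^ (M * (2 * j + 5)) := by
    have h1 : (3:ℕ) ^ (M * (j + 3)) = (3 ^ (j + 3)) ^ M := by
      rw [← pow_mul, Nat.mul_comm]
    have h2 : (2:ℕ) ^ (M * (2 * j + 5)) = (2 ^ (2 * j + 5)) ^ M := by
      rw [← pow_mul, Nat.mul_comm]
    rw [h1, h2]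
    exact Nat.pow_le_pow_left (pow3_le j) M
  have hpos : 0 < 2 ^ (M * (j + 3)) := Nat.pow_pos (by norm_num)
  have hfinal : 2 ^ (M * (j + 3)) * Nat.choose (3 * (j + 1) + 5 + M * (j + 3)) (j + 1)
      < 2 ^ (M * (j + 3)) * 2 ^ (3 * (j + 1) + 1 + M * (j + 2)) := by
    calc 2 ^ (M * (j + 3)) * Nat.choose (3 * (j + 1) + 5 + M * (j + 3)) (j + 1)
        ≤ 3 ^ (M * (j + 3)) * Nat.choose (3 * (j + 1) + 5) (j + 1) := hiter
      _ ≤ 2 ^ (M * (2 * j + 5)) * Nat.choose (3 * (j + 1) + 5) (j + 1) :=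
          Nat.mul_le_mul_right _ hpow
      _ < 2 ^ (M * (2 * j + 5)) * 2 ^ (3 * (j + 1) + 1) :=
          mul_lt_mul_of_pos_left hbase (Nat.pow_pos (by norm_num))
      _ = 2 ^ (M * (j + 3)) * 2 ^ (3 * (j + 1) + 1 + M * (j + 2)) := by
          rw [← pow_add, ← pow_add]
          congr 1
          ring
  exact Nat.lt_of_mul_lt_mul_left hfinal
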